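/- Let ŵ = π_r s_{i_l}⋯s_{i_1} be a reduced decomposition of an element of the extended affine Weyl group Ŵ and let {α̃^1,…,α̃^l} be its λ-sequence. If 1 ≤ q < r ≤ l and α̃ = c₁α̃^q + c₂α̃^r is a positive affine root for some positive rational numbers c₁, c₂ (in particular, if α̃ = α̃^q + α̃^r ∈ R̃_+), then α̃ = α̃^p for some p with q ≤ p ≤ r. -/

import Mathlib

open scoped RealInnerProductSpace Classical

noncomputable section

/-- Euclidean space ℝⁿ. -/
abbrev EV (n : ℕ) := EuclideanSpace ℝ (Fin n)

/-- ν_α = (α,α)/2. -/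
def nuu {n : ℕ} (α : EV n) : ℝ := ⟪α, α⟫ / 2

/-- α^∨ = 2α/(α,α). -/
def coroot {n : ℕ} (α : EV n) : EV n := (2 / ⟪α, α⟫) • α

/-- the reflection s_α. -/
def srefl {n : ℕ} (α : EV n) : EV n → EV n :=
  fun z => z - (2 * ⟪z, α⟫ / ⟪α, α⟫) • α

/-- the affine reflection s_ã attached to ã = [α, ν_α j], acting linearly on ℝⁿ × ℝ. -/
def aRefl {n : ℕ} (p : EV n × ℝ) : EV n × ℝ → EV n × ℝ :=
  fun z => z - (2 * ⟪z.1, p.1⟫ / ⟪p.1, p.1⟫) • p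

/-- the translation element b' ∈ Ŵ, b'([z,ζ]) = [z, ζ − (z,b)]. -/
def transl {n : ℕ} (b : EV n) : EV n × ℝ → EV n × ℝ :=
  fun z => (z.1, z.2 - ⟪z.1, b⟫)

/-- extension of a nonaffine transformation to ℝⁿ × ℝ. -/
def affExt {n : ℕ} (w : EV n → EV n) : EV n × ℝ → EV n × ℝ :=
  fun z => (w z.1, z.2)

/-- An irreducible reduced crystallographic root system in ℝⁿ, with a fixed system of
positive/simple roots, normalized so that (α,α) = 2 for short roots; `hishort` is the
highest short root ϑ and `hiroot` the highest root θ. -/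
structure RootCtx (n : ℕ) where
  R : Finset (EV n)
  pos : Finset (EV n)
  simple : Fin n → EV n
  hishort : EV n
  hiroot : EV n
  nonzero : ∀ α ∈ R, α ≠ (0 : EV n)
  neg_mem : ∀ α ∈ R, -α ∈ R
  reduced : ∀ α ∈ R, ∀ t : ℝ, t • α ∈ R → t = 1 ∨ t = -1
  crys : ∀ α ∈ R, ∀ β ∈ R, ∃ m : ℤ, 2 * ⟪β, α⟫ / ⟪α, α⟫ = (m : ℝ)
  reflect_mem : ∀ α ∈ R, ∀ β ∈ R, β - (2 * ⟪β, α⟫ / ⟪α, α⟫) • α ∈ R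
  span_top : Submodule.span ℝ (R : Set (EV n)) = ⊤
  pos_subset : pos ⊆ R
  pos_iff : ∀ α ∈ R, (α ∈ pos ↔ -α ∉ pos)
  simple_pos : ∀ i, simple i ∈ pos
  simple_inj : Function.Injective simple
  pos_sum : ∀ α ∈ pos, ∃ f : Fin n → ℕ, α = ∑ i, (f i : ℝ) • simple i
  irred : ∀ S : Finset (EV n), S ⊆ R → S.Nonempty →
      (∀ α ∈ S, ∀ β ∈ R, β ∉ S → ⟪α, β⟫ = 0) → S = R
  normalized : ∀ α ∈ R, (∀ β ∈ R, ⟪α, α⟫ ≤ ⟪β, β⟫) → ⟪α, α⟫ = 2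
  hishort_pos : hishort ∈ pos
  hishort_short : ⟪hishort, hishort⟫ = 2
  hishort_high : ∀ α ∈ R, ⟪α, α⟫ = 2 →
      ∃ f : Fin n → ℕ, hishort - α = ∑ i, (f i : ℝ) • simple i
  hiroot_pos : hiroot ∈ pos
  hiroot_high : ∀ α ∈ R, ∃ f : Fin n → ℕ, hiroot - α = ∑ i, (f i : ℝ) • simple i

namespace RootCtx

variable {n : ℕ} (c : RootCtx n)

/-- word in the simple reflections of W; the letters are listed in the order of
application (the first letter of the list acts first), so `[i₁, …, i_l]`
represents s_{i_l} ⋯ s_{i_1}. -/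
def wWord (L : List (Fin n)) : EV n → EV n :=
  L.foldl (fun f i => srefl (c.simple i) ∘ f) id

/-- membership in the Weyl group W. -/
def IsWeyl (w : EV n → EV n) : Prop := ∃ L : List (Fin n), w = c.wWord L

/-- λ(w) = {α ∈ R₊ : w(α) ∈ R₋}. -/
def lamW (w : EV n → EV n) : Finset (EV n) :=
  c.pos.filter (fun α => -(w α) ∈ c.pos)

/-- λ_ν(w). -/
def lamWnu (w : EV n → EV n) (ν : ℝ) : Finset (EV n) :=
  (c.lamW w).filter (fun α => nuu α = ν)

/-- the length l(w) = |λ(w)| of w ∈ W. -/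
def lenW (w : EV n → EV n) : ℕ := (c.lamW w).card

/-- ρ_ν = (1/2) Σ_{α ∈ R₊, ν_α = ν} α. -/
def rho (ν : ℝ) : EV n :=
  (1 / 2 : ℝ) • ∑ α ∈ c.pos.filter (fun α => nuu α = ν), α

/-- ρ_ν^∨ = ρ_ν / ν. -/
def rhoCheck (ν : ℝ) : EV n := ν⁻¹ • c.rho ν

/-- the affine root system R̃ ⊂ ℝⁿ × ℝ. -/
def aR : Set (EV n × ℝ) := {p | ∃ α ∈ c.R, ∃ j : ℤ, p = (α, nuu α * j)}

/-- positive affine roots. -/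
def aPos : Set (EV n × ℝ) :=
  {p | p ∈ c.aR ∧ (0 < p.2 ∨ (p.2 = 0 ∧ p.1 ∈ c.pos))}

/-- negative affine roots. -/
def aNeg : Set (EV n × ℝ) := {p | -p ∈ c.aPos}

/-- the affine simple roots α_0, α_1, …, α_n; the index 0 corresponds to
α₀ = [−ϑ, 1]. -/
def asimple : Fin (n + 1) → EV n × ℝ :=
  fun i => if h : i = 0 then (-c.hishort, (1 : ℝ)) else (c.simple (i.pred h), (0 : ℝ))

/-- the affine simple reflections s_0, s_1, …, s_n. -/
def aS (i : Fin (n + 1)) : EV n × ℝ → EV n × ℝ := aRefl (c.asimple i)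

/-- word in the affine simple reflections (letters in order of application). -/
def affWord (L : List (Fin (n + 1))) : EV n × ℝ → EV n × ℝ :=
  L.foldl (fun f i => c.aS i ∘ f) id

/-- the weight lattice P. -/
def PwSet : Set (EV n) :=
  {b | ∀ i, ∃ m : ℤ, 2 * ⟪b, c.simple i⟫ / ⟪c.simple i, c.simple i⟫ = (m : ℝ)}

/-- the dominant weights P₊. -/
def PplusSet : Set (EV n) :=
  {b | b ∈ c.PwSet ∧ ∀ i, 0 ≤ ⟪b, c.simple i⟫}

/-- membership in the extended affine Weyl group Ŵ = W ⋉ P,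
via the normal form w·b' with w ∈ W and b ∈ P. -/
def IsExtW (f : EV n × ℝ → EV n × ℝ) : Prop :=
  ∃ w b, c.IsWeyl w ∧ b ∈ c.PwSet ∧ f = affExt w ∘ transl b

/-- membership in Π = {π ∈ Ŵ : π(R̃₊) = R̃₊}. -/
def IsPi (f : EV n × ℝ → EV n × ℝ) : Prop :=
  c.IsExtW f ∧ f '' c.aPos = c.aPos

/-- the λ-set λ(ŵ) = R̃₊ ∩ ŵ⁻¹(R̃₋) of an affine transformation. -/
def aLam (f : EV n × ℝ → EV n × ℝ) : Set (EV n × ℝ) :=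
  {p | p ∈ c.aPos ∧ f p ∈ c.aNeg}

/-- the ν-part λ_ν(ŵ). -/
def aLamNu (f : EV n × ℝ → EV n × ℝ) (ν : ℝ) : Set (EV n × ℝ) :=
  {p | p ∈ c.aLam f ∧ nuu p.1 = ν}

/-- the length l(ŵ) = |λ(ŵ)|. -/
def aLen (f : EV n × ℝ → EV n × ℝ) : ℕ := (c.aLam f).ncard

/-- `(π, L)` is a reduced decomposition ŵ = π_r s_{i_l} ⋯ s_{i_1}: π ∈ Π and
the word length is minimal among all such presentations of the same element. -/
def IsReducedA (π : EV n × ℝ → EV n × ℝ) (L : List (Fin (n + 1))) : Prop :=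
  c.IsPi π ∧
    ∀ (π' : EV n × ℝ → EV n × ℝ) (L' : List (Fin (n + 1))),
      c.IsPi π' → π' ∘ c.affWord L' = π ∘ c.affWord L → L.length ≤ L'.length

/-- the λ-sequence α̃¹, α̃², … of a word (0-based indexing):
α̃^{k+1} = s_{i_1} s_{i_2} ⋯ s_{i_k}(α_{i_{k+1}}). -/
def lamSeq (L : List (Fin (n + 1))) (k : Fin L.length) : EV n × ℝ :=
  ((L.take k).foldr (fun i f => c.aS i ∘ f) id) (c.asimple (L.get k))

/-- the λ-sequence of a word in W (0-based indexing). -/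
def lamSeqW (L : List (Fin n)) (k : Fin L.length) : EV n :=
  ((L.take k).foldr (fun i f => srefl (c.simple i) ∘ f) id) (c.simple (L.get k))

end RootCtx

/-! ### Generic linear algebra lemmas -/

section Generic
variable {F : Type*} [NormedAddCommGroup F] [InnerProductSpace ℝ F]

lemma g_inner (a x y : F) (ha : ⟪a, a⟫ ≠ 0) :
    ⟪x - (2 * ⟪x, a⟫ / ⟪a, a⟫) • a, y - (2 * ⟪y, a⟫ / ⟪a, a⟫) • a⟫ = ⟪x, y⟫ := by
  simp only [inner_sub_left, inner_sub_right, real_inner_smul_left, real_inner_smul_right]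
  rw [real_inner_comm a y]
  field_simp
  ring

lemma g_inner_self (a z : F) (ha : ⟪a, a⟫ ≠ 0) :
    ⟪z - (2 * ⟪z, a⟫ / ⟪a, a⟫) • a, a⟫ = -⟪z, a⟫ := by
  simp only [inner_sub_left, real_inner_smul_left]
  field_simp
  ring

lemma g_lin (p x y : F × ℝ) (r s : ℝ) :
    (r • x + s • y) - (2 * ⟪(r • x + s • y).1, p.1⟫ / ⟪p.1, p.1⟫) • p
      = r • (x - (2 * ⟪x.1, p.1⟫ / ⟪p.1, p.1⟫) • p)
        + s • (y - (2 * ⟪y.1, p.1⟫ / ⟪p.1, p.1⟫) • p) := by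
  simp only [Prod.fst_add, Prod.smul_fst, inner_add_left, real_inner_smul_left]
  match_scalars <;> ring

lemma g_invol (p z : F × ℝ) (hp : ⟪p.1, p.1⟫ ≠ 0) :
    (z - (2 * ⟪z.1, p.1⟫ / ⟪p.1, p.1⟫) • p)
      - (2 * ⟪(z - (2 * ⟪z.1, p.1⟫ / ⟪p.1, p.1⟫) • p).1, p.1⟫ / ⟪p.1, p.1⟫) • p = z := by
  have h : ((z - (2 * ⟪z.1, p.1⟫ / ⟪p.1, p.1⟫) • p).1)
      = z.1 - (2 * ⟪z.1, p.1⟫ / ⟪p.1, p.1⟫) • p.1 := rfl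
  rw [h, g_inner_self p.1 z.1 hp, mul_neg, neg_div, neg_smul, sub_neg_eq_add,
    sub_add_cancel]

end Generic

section ARefl
variable {n : ℕ}

lemma aRefl_fst (p z : EV n × ℝ) : (aRefl p z).1 = srefl p.1 z.1 := rfl

lemma srefl_inner (a : EV n) (ha : ⟪a, a⟫ ≠ 0) (x y : EV n) :
    ⟪srefl a x, srefl a y⟫ = ⟪x, y⟫ := g_inner a x y ha

lemma aRefl_lin (p : EV n × ℝ) (r s : ℝ) (x y : EV n × ℝ) :
    aRefl p (r • x + s • y) = r • aRefl p x + s • aRefl p y := g_lin p x y r s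

lemma aRefl_invol (p : EV n × ℝ) (hp : ⟪p.1, p.1⟫ ≠ 0) (z : EV n × ℝ) :
    aRefl p (aRefl p z) = z := g_invol p z hp

lemma aRefl_self (p : EV n × ℝ) (hp : ⟪p.1, p.1⟫ ≠ 0) : aRefl p p = -p := by
  show p - (2 * ⟪p.1, p.1⟫ / ⟪p.1, p.1⟫) • p = -p
  rw [mul_div_assoc, div_self hp, mul_one, two_smul]
  abel

lemma aRefl_conj (f : EV n × ℝ → EV n × ℝ)
    (hlin : ∀ (r s : ℝ) x y, f (r • x + s • y) = r • f x + s • f y)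
    (hiso : ∀ x y, ⟪(f x).1, (f y).1⟫ = ⟪x.1, y.1⟫) (q z : EV n × ℝ) :
    f (aRefl q z) = aRefl (f q) (f z) := by
  have hsub : ∀ (x : EV n × ℝ) (cc : ℝ) (y), f (x - cc • y) = f x - cc • f y := by
    intro x cc y
    have h := hlin 1 (-cc) x y
    simp only [one_smul, neg_smul] at h
    simpa [sub_eq_add_neg] using h
  show f (z - (2 * ⟪z.1, q.1⟫ / ⟪q.1, q.1⟫) • q)
      = f z - (2 * ⟪(f z).1, (f q).1⟫ / ⟪(f q).1, (f q).1⟫) • f q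
  rw [hsub, hiso, hiso]

end ARefl

/-! ### Finite root system basics -/

namespace RootCtx
variable {n : ℕ} (c : RootCtx n)

lemma hishort_mem : c.hishort ∈ c.R := c.pos_subset c.hishort_pos

lemma norm_ge_two : ∀ α ∈ c.R, (2 : ℝ) ≤ ⟪α, α⟫ := by
  obtain ⟨α₀, hmem, hmin⟩ :=
    c.R.exists_min_image (fun α => ⟪α, α⟫) ⟨_, c.hishort_mem⟩
  have h2 : ⟪α₀, α₀⟫ = 2 := c.normalized α₀ hmem (fun β hβ => hmin β hβ)
  intro α hα
  rw [← h2]; exact hmin α hα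

lemma inner_self_pos {α : EV n} (hα : α ∈ c.R) : 0 < ⟪α, α⟫ :=
  lt_of_lt_of_le (by norm_num) (c.norm_ge_two α hα)

lemma inner_self_ne {α : EV n} (hα : α ∈ c.R) : ⟪α, α⟫ ≠ 0 :=
  ne_of_gt (c.inner_self_pos hα)

lemma nuu_pos {α : EV n} (hα : α ∈ c.R) : 0 < nuu α := by
  have := c.inner_self_pos hα
  unfold nuu; linarith

lemma nuu_ge_one {α : EV n} (hα : α ∈ c.R) : 1 ≤ nuu α := by
  have := c.norm_ge_two α hα
  unfold nuu; linarith

lemma simple_mem (i : Fin n) : c.simple i ∈ c.R := c.pos_subset (c.simple_pos i)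

lemma simple_inner_ne (i : Fin n) : ⟪c.simple i, c.simple i⟫ ≠ 0 :=
  c.inner_self_ne (c.simple_mem i)

lemma mem_pos_neg {α : EV n} (hα : α ∈ c.R) (h : α ∉ c.pos) : -α ∈ c.pos := by
  by_contra h'
  exact h ((c.pos_iff α hα).2 h')

lemma not_both_pos {α : EV n} (h1 : α ∈ c.pos) (h2 : -α ∈ c.pos) : False :=
  ((c.pos_iff α (c.pos_subset h1)).1 h1) h2

/-- the simple roots form a basis -/
def bas : Module.Basis (Fin n) ℝ (EV n) :=
  basisOfTopLeSpanOfCardEqFinrank c.simple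
    (by
      rw [← c.span_top]
      refine Submodule.span_le.2 ?_
      intro α hα
      have hαR : α ∈ c.R := hα
      have key : ∀ β ∈ c.pos, β ∈ Submodule.span ℝ (Set.range c.simple) := by
        intro β hβ
        obtain ⟨f, hf⟩ := c.pos_sum β hβ
        rw [hf]
        exact Submodule.sum_mem _ (fun i _ =>
          Submodule.smul_mem _ _ (Submodule.subset_span ⟨i, rfl⟩))
      by_cases h : α ∈ c.pos
      · exact key α h
      · have := key (-α) (c.mem_pos_neg hαR h)
        simpa using Submodule.neg_mem _ this)
    (by simp [finrank_euclideanSpace_fin])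

lemma bas_eq : ⇑c.bas = c.simple := coe_basisOfTopLeSpanOfCardEqFinrank _ _ _

lemma repr_sum (f : Fin n → ℝ) (j : Fin n) :
    c.bas.repr (∑ i, f i • c.simple i) j = f j := by
  have h : (∑ i, f i • c.simple i) = ∑ i, f i • c.bas i := by rw [c.bas_eq]
  rw [h, c.bas.repr_sum_self]

lemma repr_simple (i j : Fin n) :
    c.bas.repr (c.simple i) j = if i = j then 1 else 0 := by
  have : c.simple i = c.bas i := by rw [c.bas_eq]
  rw [this, c.bas.repr_self]
  simp [Finsupp.single_apply]

lemma pos_coord_nonneg {α : EV n} (hα : α ∈ c.pos) (j : Fin n) :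
    0 ≤ c.bas.repr α j := by
  obtain ⟨f, hf⟩ := c.pos_sum α hα
  rw [hf, c.repr_sum]
  positivity

lemma mem_pos_of_coord_pos {α : EV n} (hα : α ∈ c.R) {j : Fin n}
    (hj : 0 < c.bas.repr α j) : α ∈ c.pos := by
  by_contra h
  have h2 := c.pos_coord_nonneg (c.mem_pos_neg hα h) j
  rw [map_neg] at h2
  simp only [Finsupp.coe_neg, Pi.neg_apply] at h2
  linarith

lemma exists_coord_pos {α : EV n} (hα : α ∈ c.pos) : ∃ j, 0 < c.bas.repr α j := by
  by_contra h
  push_neg at h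
  have hz : ∀ j, c.bas.repr α j = 0 := fun j =>
    le_antisymm (h j) (c.pos_coord_nonneg hα j)
  have : α = 0 := by
    have : c.bas.repr α = 0 := by ext j; exact hz j
    simpa using congrArg c.bas.repr.symm this
  exact c.nonzero α (c.pos_subset hα) this

lemma exists_coord_pos_ne {α : EV n} (hα : α ∈ c.pos) (i : Fin n)
    (hne : α ≠ c.simple i) : ∃ j, j ≠ i ∧ 0 < c.bas.repr α j := by
  obtain ⟨f, hf⟩ := c.pos_sum α hα
  by_cases h : ∀ j, j ≠ i → f j = 0
  · exfalso
    have hα' : α = (f i : ℝ) • c.simple i := by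
      rw [hf, Finset.sum_eq_single i]
      · intro b _ hb; rw [h b hb]; simp
      · intro hb; exact absurd (Finset.mem_univ i) hb
    have hR : ((f i : ℝ)) • c.simple i ∈ c.R := by rw [← hα']; exact c.pos_subset hα
    rcases c.reduced (c.simple i) (c.simple_mem i) _ hR with h1 | h1
    · exact hne (by rw [hα', h1, one_smul])
    · have : (0:ℝ) ≤ (f i : ℝ) := Nat.cast_nonneg _
      rw [h1] at this; linarith
  · push_neg at h
    obtain ⟨j, hji, hfj⟩ := h
    refine ⟨j, hji, ?_⟩
    rw [hf, c.repr_sum]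
    exact_mod_cast Nat.pos_of_ne_zero hfj

lemma srefl_simple_pos {α : EV n} (hα : α ∈ c.pos) (i : Fin n)
    (hne : α ≠ c.simple i) : srefl (c.simple i) α ∈ c.pos := by
  have hR : srefl (c.simple i) α ∈ c.R :=
    c.reflect_mem (c.simple i) (c.simple_mem i) α (c.pos_subset hα)
  obtain ⟨j, hji, hj⟩ := c.exists_coord_pos_ne hα i hne
  apply c.mem_pos_of_coord_pos hR (j := j)
  have : srefl (c.simple i) α
      = α - (2 * ⟪α, c.simple i⟫ / ⟪c.simple i, c.simple i⟫) • c.simple i := rfl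
  rw [this, map_sub, map_smul]
  simp only [Finsupp.coe_sub, Pi.sub_apply, Finsupp.coe_smul, Pi.smul_apply, smul_eq_mul]
  rw [c.repr_simple]
  simp [Ne.symm hji]
  exact hj

lemma theta_dom_simple (i : Fin n) : 0 ≤ ⟪c.hishort, c.simple i⟫ := by
  by_contra h
  push_neg at h
  set k : ℝ := 2 * ⟪c.hishort, c.simple i⟫ / ⟪c.simple i, c.simple i⟫ with hk
  have hkneg : k < 0 := by
    apply div_neg_of_neg_of_pos (by linarith) (c.inner_self_pos (c.simple_mem i))
  have hβR : srefl (c.simple i) c.hishort ∈ c.R :=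
    c.reflect_mem (c.simple i) (c.simple_mem i) _ c.hishort_mem
  have hβ2 : ⟪srefl (c.simple i) c.hishort, srefl (c.simple i) c.hishort⟫ = 2 := by
    rw [srefl_inner _ (c.simple_inner_ne i), c.hishort_short]
  obtain ⟨g, hg⟩ := c.hishort_high _ hβR hβ2
  have hdiff : c.hishort - srefl (c.simple i) c.hishort = k • c.simple i := by
    show c.hishort - (c.hishort - k • c.simple i) = k • c.simple i
    abel
  rw [hdiff] at hg
  have := congrArg (fun v => c.bas.repr v i) hg
  rw [map_smul, c.repr_sum] at this
  simp only [Finsupp.coe_smul, Pi.smul_apply, smul_eq_mul] at this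
  rw [c.repr_simple] at this
  simp at this
  have : k = (g i : ℝ) := this
  have : (0:ℝ) ≤ k := this ▸ Nat.cast_nonneg _
  linarith

lemma theta_dom {α : EV n} (hα : α ∈ c.pos) : 0 ≤ ⟪α, c.hishort⟫ := by
  obtain ⟨f, hf⟩ := c.pos_sum α hα
  rw [hf, sum_inner]
  apply Finset.sum_nonneg
  intro i _
  rw [real_inner_smul_left]
  have h1 : 0 ≤ ⟪c.simple i, c.hishort⟫ := by
    rw [real_inner_comm]; exact c.theta_dom_simple i
  positivity

end RootCtx

/-! ### Affine root basics -/

namespace RootCtx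
variable {n : ℕ} (c : RootCtx n)

lemma nuu_neg (α : EV n) : nuu (-α) = nuu α := by
  unfold nuu; rw [inner_neg_neg]

lemma hishort_inner_ne : ⟪c.hishort, c.hishort⟫ ≠ 0 := c.inner_self_ne c.hishort_mem

lemma asimple_zero : c.asimple 0 = (-c.hishort, (1:ℝ)) := by
  unfold asimple; simp

lemma asimple_ne_zero {i : Fin (n+1)} (h : i ≠ 0) :
    c.asimple i = (c.simple (i.pred h), (0:ℝ)) := by
  unfold asimple; simp [h]

lemma asimple_fst_mem (i : Fin (n+1)) : (c.asimple i).1 ∈ c.R := by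
  by_cases h : i = 0
  · subst h; rw [c.asimple_zero]; exact c.neg_mem _ c.hishort_mem
  · rw [c.asimple_ne_zero h]; exact c.simple_mem _

lemma asimple_inner_ne (i : Fin (n+1)) : ⟪(c.asimple i).1, (c.asimple i).1⟫ ≠ 0 :=
  c.inner_self_ne (c.asimple_fst_mem i)

lemma asimple_mem_aR (i : Fin (n+1)) : c.asimple i ∈ c.aR := by
  by_cases h : i = 0
  · subst h; rw [c.asimple_zero]
    refine ⟨-c.hishort, c.neg_mem _ c.hishort_mem, 1, ?_⟩
    rw [nuu_neg]
    unfold nuu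
    rw [c.hishort_short]
    norm_num
  · rw [c.asimple_ne_zero h]
    refine ⟨c.simple (i.pred h), c.simple_mem _, 0, ?_⟩
    simp

lemma asimple_mem_aPos (i : Fin (n+1)) : c.asimple i ∈ c.aPos := by
  refine ⟨c.asimple_mem_aR i, ?_⟩
  by_cases h : i = 0
  · subst h; rw [c.asimple_zero]; left; norm_num
  · rw [c.asimple_ne_zero h]; right; exact ⟨rfl, c.simple_pos _⟩

lemma aPos_sub_aR {p : EV n × ℝ} (hp : p ∈ c.aPos) : p ∈ c.aR := hp.1

lemma aR_neg {p : EV n × ℝ} (hp : p ∈ c.aR) : -p ∈ c.aR := by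
  obtain ⟨α, hα, j, rfl⟩ := hp
  refine ⟨-α, c.neg_mem _ hα, -j, ?_⟩
  rw [nuu_neg]
  refine Prod.ext_iff.2 ⟨by simp, ?_⟩
  simp only [Prod.snd_neg]
  push_cast
  ring

lemma aNeg_sub_aR {p : EV n × ℝ} (hp : p ∈ c.aNeg) : p ∈ c.aR := by
  have := c.aR_neg (c.aPos_sub_aR hp)
  simpa using this

lemma aPos_snd_nonneg {p : EV n × ℝ} (hp : p ∈ c.aPos) : 0 ≤ p.2 := by
  rcases hp.2 with h | h
  · linarith
  · rw [h.1]

lemma aPos_aNeg_disjoint {p : EV n × ℝ} (hp : p ∈ c.aPos) (hn : p ∈ c.aNeg) :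
    False := by
  have h1 := c.aPos_snd_nonneg hp
  have h2 := c.aPos_snd_nonneg hn
  simp only [Prod.snd_neg] at h2
  have hz : p.2 = 0 := by linarith
  rcases hp.2 with h | h
  · linarith
  · rcases hn.2 with h' | h'
    · simp only [Prod.snd_neg] at h'; linarith
    · exact c.not_both_pos h.2 h'.2

lemma aR_pos_or_neg {p : EV n × ℝ} (hp : p ∈ c.aR) : p ∈ c.aPos ∨ p ∈ c.aNeg := by
  obtain ⟨α, hα, j, rfl⟩ := hp
  have hν := c.nuu_pos hα
  rcases lt_trichotomy ((nuu α) * j) 0 with h | h | h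
  · right
    refine ⟨c.aR_neg ⟨α, hα, j, rfl⟩, ?_⟩
    left; simp only [Prod.snd_neg]; linarith
  · have hj : (j:ℝ) = 0 := by
      rcases mul_eq_zero.1 h with h' | h'
      · linarith
      · exact h'
    by_cases hpos : α ∈ c.pos
    · left; exact ⟨⟨α, hα, j, rfl⟩, Or.inr ⟨h, hpos⟩⟩
    · right
      refine ⟨c.aR_neg ⟨α, hα, j, rfl⟩, Or.inr ⟨by simp [h], ?_⟩⟩
      simp only [Prod.fst_neg]
      exact c.mem_pos_neg hα hpos
  · left; exact ⟨⟨α, hα, j, rfl⟩, Or.inl h⟩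

end RootCtx

/-! ### Affine simple reflections -/

namespace RootCtx
variable {n : ℕ} (c : RootCtx n)

lemma aS_lin (i : Fin (n+1)) (r s : ℝ) (x y : EV n × ℝ) :
    c.aS i (r • x + s • y) = r • c.aS i x + s • c.aS i y := aRefl_lin _ r s x y

lemma aS_iso (i : Fin (n+1)) (x y : EV n × ℝ) :
    ⟪(c.aS i x).1, (c.aS i y).1⟫ = ⟪x.1, y.1⟫ := by
  rw [aS, aRefl_fst, aRefl_fst, srefl_inner _ (c.asimple_inner_ne i)]

lemma aS_invol (i : Fin (n+1)) (z : EV n × ℝ) : c.aS i (c.aS i z) = z :=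
  aRefl_invol _ (c.asimple_inner_ne i) z

lemma aS_neg (i : Fin (n+1)) (x : EV n × ℝ) : c.aS i (-x) = -c.aS i x := by
  have h := c.aS_lin i (-1) 0 x x
  simpa using h

lemma aS_asimple (i : Fin (n+1)) : c.aS i (c.asimple i) = -(c.asimple i) :=
  aRefl_self _ (c.asimple_inner_ne i)

lemma aS_apply_ne_zero {i : Fin (n+1)} (h : i ≠ 0) (p : EV n × ℝ) :
    c.aS i p = (srefl (c.simple (i.pred h)) p.1, p.2) := by
  have h1 : c.aS i p = aRefl (c.simple (i.pred h), (0:ℝ)) p := by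
    rw [aS, c.asimple_ne_zero h]
  rw [h1]
  unfold aRefl srefl
  refine Prod.ext_iff.2 ⟨?_, ?_⟩ <;> simp

lemma aS_apply_zero (p : EV n × ℝ) :
    c.aS 0 p = (p.1 - ⟪p.1, c.hishort⟫ • c.hishort, p.2 + ⟪p.1, c.hishort⟫) := by
  have h1 : c.aS 0 p = aRefl (-c.hishort, (1:ℝ)) p := by
    rw [aS, c.asimple_zero]
  rw [h1]
  unfold aRefl
  refine Prod.ext_iff.2 ⟨?_, ?_⟩
  · simp only [Prod.fst_sub, Prod.smul_fst, inner_neg_neg, inner_neg_right,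
      inner_neg_left, c.hishort_short]
    match_scalars <;> ring
  · simp only [Prod.snd_sub, Prod.smul_snd, inner_neg_neg, inner_neg_right,
      inner_neg_left, c.hishort_short, smul_eq_mul]
    ring

lemma nuu_srefl_hishort (α : EV n) :
    nuu (α - ⟪α, c.hishort⟫ • c.hishort) = nuu α := by
  have h : α - ⟪α, c.hishort⟫ • c.hishort
      = α - (2 * ⟪α, c.hishort⟫ / ⟪c.hishort, c.hishort⟫) • c.hishort := by
    rw [c.hishort_short]
    norm_num
  unfold nuu
  rw [h, g_inner _ _ _ c.hishort_inner_ne]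

lemma srefl_hishort_mem {α : EV n} (hα : α ∈ c.R) :
    α - ⟪α, c.hishort⟫ • c.hishort ∈ c.R := by
  have h := c.reflect_mem c.hishort c.hishort_mem α hα
  rw [c.hishort_short] at h
  have h2 : 2 * ⟪α, c.hishort⟫ / 2 = ⟪α, c.hishort⟫ := by ring
  rwa [h2] at h

lemma crys_hishort {α : EV n} (hα : α ∈ c.R) :
    ∃ t : ℤ, ⟪α, c.hishort⟫ = (t : ℝ) * nuu α := by
  obtain ⟨t, ht⟩ := c.crys α hα c.hishort c.hishort_mem
  refine ⟨t, ?_⟩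
  have hA := c.inner_self_ne hα
  rw [div_eq_iff hA] at ht
  rw [real_inner_comm]
  unfold nuu
  linarith

lemma nuu_srefl_simple (i : Fin n) (α : EV n) :
    nuu (srefl (c.simple i) α) = nuu α := by
  unfold nuu
  rw [srefl_inner _ (c.simple_inner_ne i)]

lemma aS_mem_aR (i : Fin (n+1)) {p : EV n × ℝ} (hp : p ∈ c.aR) :
    c.aS i p ∈ c.aR := by
  obtain ⟨α, hα, j, rfl⟩ := hp
  by_cases h : i = 0
  · subst h
    rw [c.aS_apply_zero]
    obtain ⟨t, ht⟩ := c.crys_hishort hα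
    refine ⟨α - ⟪α, c.hishort⟫ • c.hishort, c.srefl_hishort_mem hα, j + t, ?_⟩
    refine Prod.ext_iff.2 ⟨rfl, ?_⟩
    simp only
    rw [c.nuu_srefl_hishort, ht]
    push_cast
    ring
  · rw [c.aS_apply_ne_zero h]
    refine ⟨srefl (c.simple (i.pred h)) α,
      c.reflect_mem _ (c.simple_mem _) α hα, j, ?_⟩
    refine Prod.ext_iff.2 ⟨rfl, ?_⟩
    simp only
    rw [c.nuu_srefl_simple]

end RootCtx

namespace RootCtx
variable {n : ℕ} (c : RootCtx n)

lemma aS_pos (i : Fin (n+1)) {p : EV n × ℝ} (hp : p ∈ c.aPos)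
    (hne : p ≠ c.asimple i) : c.aS i p ∈ c.aPos := by
  have haR : c.aS i p ∈ c.aR := c.aS_mem_aR i hp.1
  by_cases h : i = 0
  · -- the affine simple reflection s₀
    subst h
    obtain ⟨α, hα, j, rfl⟩ := hp.1
    set k : ℝ := ⟪α, c.hishort⟫ with hkdef
    have hsnd : (c.aS 0 (α, nuu α * j)).2 = nuu α * j + k := by
      rw [c.aS_apply_zero]
    have hfst : (c.aS 0 (α, nuu α * j)).1 = α - k • c.hishort := by
      rw [c.aS_apply_zero]
    obtain ⟨t, ht⟩ := c.crys_hishort hα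
    rw [← hkdef] at ht
    have hν : 0 < nuu α := c.nuu_pos hα
    have hβR : α - k • c.hishort ∈ c.R := c.srefl_hishort_mem hα
    rcases hp.2 with hlev | ⟨hz, hpos⟩
    · -- positive level:  j ≥ 1
      simp only at hlev
      have hj1 : 1 ≤ j := by
        by_contra hj
        push_neg at hj
        have : (j : ℝ) ≤ 0 := by exact_mod_cast Int.lt_add_one_iff.mp (by omega)
        nlinarith
      have hj1' : (1:ℝ) ≤ (j:ℝ) := by exact_mod_cast hj1
      rcases le_or_gt 0 t with hT | hT
      · have hT' : (0:ℝ) ≤ (t:ℝ) := by exact_mod_cast hT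
        refine ⟨haR, Or.inl ?_⟩
        rw [hsnd, ht]
        nlinarith
      · by_cases hT1 : t = -1
        · subst hT1
          have hk : k = -nuu α := by rw [ht]; push_cast; ring
          rcases lt_or_eq_of_le hj1 with hj2 | hj2
          · refine ⟨haR, Or.inl ?_⟩
            rw [hsnd, hk]
            have : (2:ℝ) ≤ (j:ℝ) := by exact_mod_cast hj2
            nlinarith
          · -- j = 1, level zero; β = α + ν ϑ is positive
            refine ⟨haR, Or.inr ⟨?_, ?_⟩⟩
            · rw [hsnd, hk, ← hj2]; push_cast; ring
            · rw [hfst]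
              have hβϑ : ⟪α - k • c.hishort, c.hishort⟫ = nuu α := by
                rw [inner_sub_left, real_inner_smul_left, c.hishort_short,
                  ← hkdef, hk]
                ring
              by_contra hneg
              have h1 := c.theta_dom (c.mem_pos_neg hβR hneg)
              rw [inner_neg_left, hβϑ] at h1
              linarith
        · have hT2 : t ≤ -2 := by omega
          have hT2' : (t:ℝ) ≤ -2 := by exact_mod_cast hT2
          have hCS : k * k ≤ ⟪α, α⟫ * 2 := by
            have := real_inner_mul_inner_self_le α c.hishort
            rw [c.hishort_short] at this
            exact this
          have hAeq : ⟪α, α⟫ = 2 * nuu α := by unfold nuu; ring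
          have hν1 : 1 ≤ nuu α := c.nuu_ge_one hα
          have ht4 : (4:ℝ) ≤ (t:ℝ) * (t:ℝ) := by nlinarith
          have step1 : 4 * (nuu α * nuu α) ≤ (t:ℝ) * (t:ℝ) * (nuu α * nuu α) :=
            mul_le_mul_of_nonneg_right ht4 (by positivity)
          have step2 : (t:ℝ) * (t:ℝ) * (nuu α * nuu α) = k * k := by rw [ht]; ring
          have step3 : k * k ≤ 4 * nuu α := by rw [hAeq] at hCS; linarith
          have step4 : 4 * nuu α ≤ 4 * (nuu α * nuu α) := by nlinarith
          have heq : nuu α * nuu α = nuu α := by linarith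
          have hνone : nuu α = 1 :=
            mul_left_cancel₀ (ne_of_gt hν) (by rw [heq, mul_one])
          have h1 : (t:ℝ) * (t:ℝ) ≤ 4 := by
            rw [hAeq, hνone] at hCS; nlinarith [step2, hCS]
          have h2 : ((t:ℝ) + 2) * ((t:ℝ) + 2) ≤ 0 := by nlinarith
          have h3 : ((t:ℝ) + 2) * ((t:ℝ) + 2) = 0 :=
            le_antisymm h2 (mul_self_nonneg _)
          have htm2 : (t:ℝ) = -2 := by
            have := mul_self_eq_zero.1 h3; linarith
          have hk2 : k = -2 := by rw [ht, htm2, hνone]; ring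
          have hγ : ⟪α + c.hishort, α + c.hishort⟫ = 0 := by
            rw [inner_add_left, inner_add_right, inner_add_right, c.hishort_short,
              real_inner_comm c.hishort α]
            have hk3 : ⟪c.hishort, α⟫ = -2 := by
              rw [real_inner_comm, ← hkdef]; exact hk2
            rw [hAeq, hνone, hk3]
            ring
          have hαϑ : α = -c.hishort := by
            have h0 : α + c.hishort = 0 := inner_self_eq_zero.1 hγ
            have := eq_neg_of_add_eq_zero_left h0
            exact this
          have hj2 : j ≠ 1 := by
            intro hj
            apply hne
            rw [c.asimple_zero]
            exact Prod.ext_iff.2 ⟨by rw [hαϑ], by rw [hνone, hj]; norm_num⟩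
          have hj3 : 2 ≤ j := by omega
          rcases eq_or_lt_of_le hj3 with hj4 | hj4
          · refine ⟨haR, Or.inr ⟨?_, ?_⟩⟩
            · rw [hsnd, hνone, ← hj4, hk2]; push_cast; ring
            · rw [hfst, hαϑ, hk2]
              have : -c.hishort - (-2 : ℝ) • c.hishort = c.hishort := by
                match_scalars; ring
              rw [this]
              exact c.hishort_pos
          · refine ⟨haR, Or.inl ?_⟩
            rw [hsnd, hνone, hk2]
            have : (3:ℝ) ≤ (j:ℝ) := by exact_mod_cast hj4
            linarith
    · -- zero level: j = 0 and α positive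
      simp only at hz
      have hk0 : 0 ≤ k := c.theta_dom hpos
      rcases eq_or_lt_of_le hk0 with hk | hk
      · refine ⟨haR, Or.inr ⟨?_, ?_⟩⟩
        · rw [hsnd, hz, ← hk]; ring
        · rw [hfst, ← hk]
          simpa using hpos
      · refine ⟨haR, Or.inl ?_⟩
        rw [hsnd, hz]
        linarith
  · -- nonaffine simple reflections
    have hsnd : (c.aS i p).2 = p.2 := by rw [c.aS_apply_ne_zero h]
    have hfst : (c.aS i p).1 = srefl (c.simple (i.pred h)) p.1 := by
      rw [c.aS_apply_ne_zero h]
    rcases hp.2 with hlev | ⟨hz, hpos⟩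
    · exact ⟨haR, Or.inl (by rw [hsnd]; exact hlev)⟩
    · refine ⟨haR, Or.inr ⟨by rw [hsnd]; exact hz, ?_⟩⟩
      rw [hfst]
      refine c.srefl_simple_pos hpos _ ?_
      intro heq
      apply hne
      rw [c.asimple_ne_zero h]
      exact Prod.ext_iff.2 ⟨heq, hz⟩

lemma eq_asimple_of_aS_neg {i : Fin (n+1)} {p : EV n × ℝ} (hp : p ∈ c.aPos)
    (hn : c.aS i p ∈ c.aNeg) : p = c.asimple i := by
  by_contra hne
  exact c.aPos_aNeg_disjoint (c.aS_pos i hp hne) hn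

lemma aS_neg_mem (i : Fin (n+1)) {p : EV n × ℝ} (hp : p ∈ c.aNeg)
    (hne : p ≠ -c.asimple i) : c.aS i p ∈ c.aNeg := by
  have h1 : -p ∈ c.aPos := hp
  have h2 : -p ≠ c.asimple i := by
    intro h; apply hne; rw [← h]; simp
  have h3 := c.aS_pos i h1 h2
  rw [c.aS_neg] at h3
  exact h3

lemma eq_neg_asimple_of_aS_pos {i : Fin (n+1)} {p : EV n × ℝ} (hp : p ∈ c.aNeg)
    (hn : c.aS i p ∈ c.aPos) : p = -c.asimple i := by
  by_contra hne
  exact c.aPos_aNeg_disjoint hn (c.aS_neg_mem i hp hne)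

end RootCtx

/-! ### Words in the affine simple reflections -/

namespace RootCtx
variable {n : ℕ} (c : RootCtx n)

/-- s_{i₁} ∘ ⋯ ∘ s_{i_k} for the word [i₁, …, i_k] -/
def bWord (K : List (Fin (n+1))) : EV n × ℝ → EV n × ℝ :=
  K.foldr (fun i f => c.aS i ∘ f) id

lemma bWord_cons (i : Fin (n+1)) (K : List (Fin (n+1))) :
    c.bWord (i :: K) = c.aS i ∘ c.bWord K := rfl

lemma bWord_append (K1 K2 : List (Fin (n+1))) :
    c.bWord (K1 ++ K2) = c.bWord K1 ∘ c.bWord K2 := by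
  induction K1 with
  | nil => rfl
  | cons i K ih =>
    show c.aS i ∘ c.bWord (K ++ K2) = (c.aS i ∘ c.bWord K) ∘ c.bWord K2
    rw [ih]; rfl

lemma affWord_foldl (K : List (Fin (n+1))) (h : EV n × ℝ → EV n × ℝ) :
    K.foldl (fun f i => c.aS i ∘ f) h = c.affWord K ∘ h := by
  induction K generalizing h with
  | nil => rfl
  | cons i K ih =>
    show K.foldl _ (c.aS i ∘ h) = c.affWord (i :: K) ∘ h
    rw [ih (c.aS i ∘ h)]
    have h2 : c.affWord (i :: K) = c.affWord K ∘ (c.aS i ∘ id) := ih _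
    rw [h2]; rfl

lemma affWord_cons (i : Fin (n+1)) (K : List (Fin (n+1))) :
    c.affWord (i :: K) = c.affWord K ∘ c.aS i := by
  have h2 : c.affWord (i :: K) = c.affWord K ∘ (c.aS i ∘ id) :=
    c.affWord_foldl K (c.aS i ∘ id)
  rw [h2]; rfl

lemma affWord_append (K1 K2 : List (Fin (n+1))) :
    c.affWord (K1 ++ K2) = c.affWord K2 ∘ c.affWord K1 := by
  unfold affWord
  rw [List.foldl_append]
  exact c.affWord_foldl K2 _

lemma bWord_affWord (K : List (Fin (n+1))) (z : EV n × ℝ) :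
    c.bWord K (c.affWord K z) = z := by
  induction K generalizing z with
  | nil => rfl
  | cons i K ih =>
    rw [c.affWord_cons]
    show c.aS i (c.bWord K (c.affWord K (c.aS i z))) = z
    rw [ih (c.aS i z), c.aS_invol]

lemma affWord_bWord (K : List (Fin (n+1))) (z : EV n × ℝ) :
    c.affWord K (c.bWord K z) = z := by
  induction K generalizing z with
  | nil => rfl
  | cons i K ih =>
    rw [c.affWord_cons]
    show c.affWord K (c.aS i (c.aS i (c.bWord K z))) = z
    rw [c.aS_invol]
    exact ih z

lemma affWord_lin (K : List (Fin (n+1))) (r s : ℝ) (x y : EV n × ℝ) :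
    c.affWord K (r • x + s • y) = r • c.affWord K x + s • c.affWord K y := by
  induction K generalizing x y with
  | nil => rfl
  | cons i K ih =>
    simp only [c.affWord_cons, Function.comp_apply]
    rw [c.aS_lin]
    exact ih _ _

lemma affWord_neg (K : List (Fin (n+1))) (x : EV n × ℝ) :
    c.affWord K (-x) = -c.affWord K x := by
  have h := c.affWord_lin K (-1) 0 x x
  simpa using h

lemma bWord_lin (K : List (Fin (n+1))) (r s : ℝ) (x y : EV n × ℝ) :
    c.bWord K (r • x + s • y) = r • c.bWord K x + s • c.bWord K y := by
  induction K generalizing x y with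
  | nil => rfl
  | cons i K ih =>
    simp only [c.bWord_cons, Function.comp_apply]
    rw [ih]
    exact c.aS_lin i _ _ _ _

lemma bWord_neg (K : List (Fin (n+1))) (x : EV n × ℝ) :
    c.bWord K (-x) = -c.bWord K x := by
  have h := c.bWord_lin K (-1) 0 x x
  simpa using h

lemma aS_conj (i : Fin (n+1)) (p z : EV n × ℝ) :
    c.aS i (aRefl p z) = aRefl (c.aS i p) (c.aS i z) :=
  aRefl_conj (c.aS i) (c.aS_lin i) (c.aS_iso i) p z

lemma bWord_conj (K : List (Fin (n+1))) (p z : EV n × ℝ) :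
    c.bWord K (aRefl p z) = aRefl (c.bWord K p) (c.bWord K z) := by
  induction K with
  | nil => rfl
  | cons i K ih =>
    simp only [c.bWord_cons, Function.comp_apply]
    rw [ih, c.aS_conj]

lemma affWord_mem_aR (K : List (Fin (n+1))) {p : EV n × ℝ} (hp : p ∈ c.aR) :
    c.affWord K p ∈ c.aR := by
  induction K generalizing p with
  | nil => exact hp
  | cons i K ih =>
    simp only [c.affWord_cons, Function.comp_apply]
    exact ih (c.aS_mem_aR i hp)

lemma bWord_mem_aR (K : List (Fin (n+1))) {p : EV n × ℝ} (hp : p ∈ c.aR) :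
    c.bWord K p ∈ c.aR := by
  induction K with
  | nil => exact hp
  | cons i K ih =>
    simp only [c.bWord_cons, Function.comp_apply]
    exact c.aS_mem_aR i ih

lemma lamSeq_eq (L : List (Fin (n+1))) (k : Fin L.length) :
    c.lamSeq L k = c.bWord (L.take k) (c.asimple (L.get k)) := rfl

lemma lamSeq_mem_aR (L : List (Fin (n+1))) (k : Fin L.length) :
    c.lamSeq L k ∈ c.aR := by
  rw [c.lamSeq_eq]
  exact c.bWord_mem_aR _ (c.asimple_mem_aR _)

lemma crossing_up {β : ℕ → EV n × ℝ} {m : ℕ} (h0 : β 0 ∉ c.aPos)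
    (hm : β m ∈ c.aPos) : ∃ i < m, β i ∉ c.aPos ∧ β (i+1) ∈ c.aPos := by
  induction m with
  | zero => exact absurd hm h0
  | succ m ih =>
    by_cases h : β m ∈ c.aPos
    · obtain ⟨i, hi, h1, h2⟩ := ih h
      exact ⟨i, Nat.lt_succ_of_lt hi, h1, h2⟩
    · exact ⟨m, Nat.lt_succ_self m, h, hm⟩

end RootCtx

namespace RootCtx
variable {n : ℕ} (c : RootCtx n)

lemma lamSeq_mem_aPos (π : EV n × ℝ → EV n × ℝ) (L : List (Fin (n+1)))
    (hred : c.IsReducedA π L) (k : Fin L.length) : c.lamSeq L k ∈ c.aPos := by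
  by_contra hneg
  have hmlen : (k : ℕ) < L.length := k.isLt
  have hβm : c.bWord ((L.take (k:ℕ)).drop (k:ℕ)) (c.asimple (L.get k)) ∈ c.aPos := by
    have hnil : (L.take (k:ℕ)).drop (k:ℕ) = [] := by
      apply List.drop_eq_nil_of_le; simp
    rw [hnil]
    exact c.asimple_mem_aPos _
  have hβ0 : c.bWord ((L.take (k:ℕ)).drop 0) (c.asimple (L.get k)) ∉ c.aPos := by
    rw [List.drop_zero]; exact hneg
  obtain ⟨i, him, h1, h2⟩ := c.crossing_up
    (β := fun i => c.bWord ((L.take (k:ℕ)).drop i) (c.asimple (L.get k))) hβ0 hβm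
  have hgi : i < L.length := by omega
  have hstep : c.bWord ((L.take (k:ℕ)).drop i) (c.asimple (L.get k))
      = c.aS (L[i]'hgi) (c.bWord ((L.take (k:ℕ)).drop (i+1)) (c.asimple (L.get k))) := by
    have hlen : i < (L.take (k:ℕ)).length := by simp; omega
    have hdrop : (L.take (k:ℕ)).drop i = (L.take (k:ℕ))[i] :: (L.take (k:ℕ)).drop (i+1) :=
      List.drop_eq_getElem_cons hlen
    have hgi' : (L.take (k:ℕ))[i] = L[i]'hgi := List.getElem_take
    rw [hdrop, hgi', c.bWord_cons]
    rfl
  have h1' : c.bWord ((L.take (k:ℕ)).drop i) (c.asimple (L.get k)) ∈ c.aNeg := by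
    rcases c.aR_pos_or_neg (c.bWord_mem_aR _ (c.asimple_mem_aR (L.get k))) with h | h
    · exact absurd h h1
    · exact h
  have hkey : c.bWord ((L.take (k:ℕ)).drop (i+1)) (c.asimple (L.get k))
      = c.asimple (L[i]'hgi) := by
    apply c.eq_asimple_of_aS_neg h2
    rw [← hstep]
    exact h1'
  have hgetk : L.get k = L[(k:ℕ)]'hmlen := rfl
  -- notation
  set g1 : Fin (n+1) := L[i]'hgi with hg1
  set g2 : Fin (n+1) := L[(k:ℕ)]'hmlen with hg2
  set seg : List (Fin (n+1)) := (L.take (k:ℕ)).drop (i+1) with hseg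
  set T1 : List (Fin (n+1)) := L.take i with hT1
  set T3 : List (Fin (n+1)) := L.drop ((k:ℕ)+1) with hT3
  have hsplit : L = T1 ++ g1 :: (seg ++ g2 :: T3) := by
    have e1 : L = L.take (k:ℕ) ++ g2 :: T3 := by
      rw [hT3, hg2, ← List.drop_eq_getElem_cons hmlen, List.take_append_drop]
    have e2 : L.take (k:ℕ) = T1 ++ g1 :: seg := by
      have f1 : L.take (k:ℕ) = (L.take (k:ℕ)).take i ++ (L.take (k:ℕ)).drop i :=
        (List.take_append_drop _ _).symm
      have f2 : (L.take (k:ℕ)).take i = T1 := by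
        rw [hT1, List.take_take]
        congr 1
        omega
      have f3 : (L.take (k:ℕ)).drop i = g1 :: seg := by
        rw [hseg, List.drop_eq_getElem_cons (by simp; omega : i < (L.take (k:ℕ)).length)]
        rw [hg1]
        congr 1
        exact List.getElem_take
      rw [f1, f2, f3]
    calc L = L.take (k:ℕ) ++ g2 :: T3 := e1
      _ = (T1 ++ g1 :: seg) ++ g2 :: T3 := by rw [← e2]
      _ = T1 ++ g1 :: (seg ++ g2 :: T3) := by simp
  have hcomm : ∀ z, c.affWord seg (c.aS g1 z) = c.aS g2 (c.affWord seg z) := by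
    intro z
    have hc := c.bWord_conj seg (c.asimple g2) (c.affWord seg z)
    rw [c.bWord_affWord] at hc
    have hβi : c.bWord seg (c.asimple g2) = c.asimple g1 := hkey
    rw [hβi] at hc
    have hc' : c.bWord seg (c.aS g2 (c.affWord seg z)) = c.aS g1 z := hc
    have := congrArg (c.affWord seg) hc'
    rw [c.affWord_bWord] at this
    exact this.symm
  have hword : c.affWord L = c.affWord (T1 ++ (seg ++ T3)) := by
    conv_lhs => rw [hsplit]
    rw [c.affWord_append, c.affWord_cons, c.affWord_append, c.affWord_cons,
      c.affWord_append]
    funext z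
    simp only [Function.comp_apply]
    rw [hcomm (c.affWord T1 z), c.aS_invol, c.affWord_append seg T3]
    rfl
  have hlength : (T1 ++ (seg ++ T3)).length < L.length := by
    simp only [List.length_append, hT1, hseg, hT3, List.length_take,
      List.length_drop]
    omega
  have hle := hred.2 π (T1 ++ (seg ++ T3)) hred.1 (by rw [← hword])
  omega

end RootCtx

namespace RootCtx
variable {n : ℕ} (c : RootCtx n)

lemma cone_pos {P Q x : EV n × ℝ} (hP : P ∈ c.aPos) (hQ : Q ∈ c.aPos)
    {c₁ c₂ : ℝ} (h1 : 0 < c₁) (h2 : 0 < c₂) (hx : x ∈ c.aR)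
    (hxe : x = c₁ • P + c₂ • Q) : x ∈ c.aPos := by
  obtain ⟨α, hα, j, rfl⟩ := hx
  have hP2 := c.aPos_snd_nonneg hP
  have hQ2 := c.aPos_snd_nonneg hQ
  have hx2 : nuu α * (j:ℝ) = c₁ * P.2 + c₂ * Q.2 := by
    have := congrArg Prod.snd hxe
    simpa using this
  have hx1 : α = c₁ • P.1 + c₂ • Q.1 := by
    have := congrArg Prod.fst hxe
    simpa using this
  have hx2nn : 0 ≤ nuu α * (j:ℝ) := by rw [hx2]; positivity
  rcases eq_or_lt_of_le hx2nn with hz | hpos2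
  · have hPz : P.2 = 0 := by nlinarith
    have hQz : Q.2 = 0 := by nlinarith
    have hPpos : P.1 ∈ c.pos := by
      rcases hP.2 with h | h
      · linarith
      · exact h.2
    have hQpos : Q.1 ∈ c.pos := by
      rcases hQ.2 with h | h
      · linarith
      · exact h.2
    obtain ⟨j₀, hj₀⟩ := c.exists_coord_pos hPpos
    have hco : 0 < c.bas.repr α j₀ := by
      rw [hx1, map_add, map_smul, map_smul]
      simp only [Finsupp.coe_add, Pi.add_apply, Finsupp.coe_smul, Pi.smul_apply,
        smul_eq_mul]
      have := c.pos_coord_nonneg hQpos j₀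
      nlinarith
    exact ⟨⟨α, hα, j, rfl⟩, Or.inr ⟨hz.symm, c.mem_pos_of_coord_pos hα hco⟩⟩
  · exact ⟨⟨α, hα, j, rfl⟩, Or.inl hpos2⟩

lemma cone_neg {P Q x : EV n × ℝ} (hP : P ∈ c.aNeg) (hQ : Q ∈ c.aNeg)
    {c₁ c₂ : ℝ} (h1 : 0 < c₁) (h2 : 0 < c₂) (hx : x ∈ c.aR)
    (hxe : x = c₁ • P + c₂ • Q) : x ∈ c.aNeg := by
  have hneg : -x = c₁ • (-P) + c₂ • (-Q) := by
    rw [hxe]; module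
  exact c.cone_pos (P := -P) (Q := -Q) hP hQ h1 h2 (c.aR_neg hx) hneg

lemma affWord_take_succ (L : List (Fin (n+1))) {k : ℕ} (hk : k < L.length)
    (z : EV n × ℝ) :
    c.affWord (L.take (k+1)) z = c.aS (L[k]'hk) (c.affWord (L.take k) z) := by
  have htake : L.take (k+1) = L.take k ++ [L[k]'hk] := by
    rw [List.take_succ, List.getElem?_eq_getElem hk]; rfl
  rw [htake, c.affWord_append]
  rfl

lemma bWord_take_succ (L : List (Fin (n+1))) {k : ℕ} (hk : k < L.length)
    (z : EV n × ℝ) :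
    c.bWord (L.take (k+1)) z = c.bWord (L.take k) (c.aS (L[k]'hk) z) := by
  have htake : L.take (k+1) = L.take k ++ [L[k]'hk] := by
    rw [List.take_succ, List.getElem?_eq_getElem hk]; rfl
  rw [htake, c.bWord_append]
  rfl

lemma lamSeq_not_neg (π : EV n × ℝ → EV n × ℝ) (L : List (Fin (n+1)))
    (hred : c.IsReducedA π L) (k k' : Fin L.length)
    (h : c.lamSeq L k = -c.lamSeq L k') : False := by
  have h1 := c.lamSeq_mem_aPos π L hred k
  have h2 := c.lamSeq_mem_aPos π L hred k'
  have : c.lamSeq L k' ∈ c.aNeg := by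
    show -c.lamSeq L k' ∈ c.aPos
    rw [← h]; exact h1
  exact c.aPos_aNeg_disjoint h2 this

lemma claimA (π : EV n × ℝ → EV n × ℝ) (L : List (Fin (n+1)))
    (hred : c.IsReducedA π L) (r : Fin L.length) :
    ∀ d : ℕ, d ≤ (r:ℕ) →
      c.affWord (L.take ((r:ℕ) - d)) (c.lamSeq L r) ∈ c.aPos := by
  intro d
  induction d with
  | zero =>
    intro _
    rw [Nat.sub_zero, c.lamSeq_eq, c.affWord_bWord]
    exact c.asimple_mem_aPos _
  | succ d ih =>
    intro hd
    have hd' : d ≤ (r:ℕ) := by omega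
    have hrlen : (r:ℕ) < L.length := r.isLt
    set k : ℕ := (r:ℕ) - (d+1) with hkdef
    have hk1 : (r:ℕ) - d = k + 1 := by omega
    have hklen : k < L.length := by omega
    have hprev := ih hd'
    rw [hk1, c.affWord_take_succ L hklen] at hprev
    by_cases hcase :
        c.aS (L[k]'hklen) (c.affWord (L.take k) (c.lamSeq L r))
          = c.asimple (L[k]'hklen)
    · exfalso
      have hx : c.lamSeq L r
          = c.bWord (L.take (k+1)) (c.asimple (L[k]'hklen)) := by
        rw [← hcase, ← c.affWord_take_succ L hklen, c.bWord_affWord]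
      have hx2 : c.lamSeq L r = -c.lamSeq L ⟨k, hklen⟩ := by
        rw [hx, c.bWord_take_succ L hklen, c.aS_asimple, c.bWord_neg,
          c.lamSeq_eq]
        rfl
      exact c.lamSeq_not_neg π L hred r ⟨k, hklen⟩ hx2
    · have hgoal : c.affWord (L.take k) (c.lamSeq L r)
          = c.aS (L[k]'hklen)
              (c.aS (L[k]'hklen) (c.affWord (L.take k) (c.lamSeq L r))) :=
        (c.aS_invol _ _).symm
      rw [hgoal]
      exact c.aS_pos _ hprev hcase

lemma claimB (π : EV n × ℝ → EV n × ℝ) (L : List (Fin (n+1)))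
    (hred : c.IsReducedA π L) (q : Fin L.length) :
    ∀ d : ℕ, (q:ℕ) + 1 + d ≤ L.length →
      c.affWord (L.take ((q:ℕ) + 1 + d)) (c.lamSeq L q) ∈ c.aNeg := by
  intro d
  induction d with
  | zero =>
    intro _
    have hqlen : (q:ℕ) < L.length := q.isLt
    show c.affWord (L.take ((q:ℕ) + 1)) (c.lamSeq L q) ∈ c.aNeg
    rw [c.affWord_take_succ L hqlen, c.lamSeq_eq, c.affWord_bWord]
    have hget : c.aS (L[(q:ℕ)]'hqlen) (c.asimple (L.get q))
        = -c.asimple (L.get q) := c.aS_asimple (L[(q:ℕ)]'hqlen)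
    rw [hget]
    show -(-(c.asimple (L.get q))) ∈ c.aPos
    rw [neg_neg]
    exact c.asimple_mem_aPos _
  | succ d ih =>
    intro hd
    set k : ℕ := (q:ℕ) + 1 + d with hkdef
    have hklen : k < L.length := by omega
    have hprev := ih (by omega)
    have hk1 : (q:ℕ) + 1 + (d+1) = k + 1 := by omega
    rw [hk1, c.affWord_take_succ L hklen]
    by_cases hcase :
        c.affWord (L.take k) (c.lamSeq L q) = -c.asimple (L[k]'hklen)
    · exfalso
      have hx : c.lamSeq L q = c.bWord (L.take k) (-c.asimple (L[k]'hklen)) := by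
        rw [← hcase, c.bWord_affWord]
      have hx2 : c.lamSeq L q = -c.lamSeq L ⟨k, hklen⟩ := by
        rw [hx, c.bWord_neg, c.lamSeq_eq]
        rfl
      exact c.lamSeq_not_neg π L hred q ⟨k, hklen⟩ hx2
    · exact c.aS_neg_mem _ hprev hcase

end RootCtx

namespace RootCtx
variable {n : ℕ} (c : RootCtx n)

lemma crossing_down {β : ℕ → EV n × ℝ} {a b : ℕ} (hab : a ≤ b)
    (ha : β a ∈ c.aPos) (hb : β b ∉ c.aPos) :
    ∃ p, a ≤ p ∧ p < b ∧ β p ∈ c.aPos ∧ β (p+1) ∉ c.aPos := by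
  induction b with
  | zero =>
    have : a = 0 := by omega
    exact absurd (this ▸ ha) hb
  | succ b ih =>
    have hane : a ≠ b + 1 := fun h => hb (h ▸ ha)
    have hab' : a ≤ b := by omega
    by_cases hcase : β b ∈ c.aPos
    · exact ⟨b, hab', Nat.lt_succ_self _, hcase, hb⟩
    · obtain ⟨p, h1, h2, h3, h4⟩ := ih hab' hcase
      exact ⟨p, h1, by omega, h3, h4⟩

end RootCtx

open RootCtx in
/-- Let ŵ = π_r s_{i_l}⋯s_{i_1} be a reduced decomposition in Ŵ, with
λ-sequence {α̃¹,…,α̃^l}.  If `q < r` (0-based indices) and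
α̃ = c₁·α̃^q + c₂·α̃^r is a positive affine root for positive rationals c₁, c₂,
then α̃ = α̃^p for some p between q and r. -/
theorem lamSeq_convex {n : ℕ} (c : RootCtx n)
    (π : EV n × ℝ → EV n × ℝ) (L : List (Fin (n + 1)))
    (hred : c.IsReducedA π L)
    (q r : Fin L.length) (hqr : q < r)
    (c₁ c₂ : ℚ) (hc₁ : 0 < c₁) (hc₂ : 0 < c₂)
    (A : EV n × ℝ)
    (hA : A = (c₁ : ℝ) • c.lamSeq L q + (c₂ : ℝ) • c.lamSeq L r)
    (hApos : A ∈ c.aPos) :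
    ∃ p : Fin L.length, q ≤ p ∧ p ≤ r ∧ c.lamSeq L p = A := by
  have hqr' : (q:ℕ) < (r:ℕ) := hqr
  have hrlen : (r:ℕ) < L.length := r.isLt
  have hc₁' : (0:ℝ) < (c₁:ℝ) := by exact_mod_cast hc₁
  have hc₂' : (0:ℝ) < (c₂:ℝ) := by exact_mod_cast hc₂
  have hAaR : A ∈ c.aR := hApos.1
  -- the image of A under u_q is positive
  have hBq : c.affWord (L.take (q:ℕ)) A ∈ c.aPos := by
    have hsplit : c.affWord (L.take (q:ℕ)) A
        = (c₁:ℝ) • c.affWord (L.take (q:ℕ)) (c.lamSeq L q)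
          + (c₂:ℝ) • c.affWord (L.take (q:ℕ)) (c.lamSeq L r) := by
      rw [hA]; exact c.affWord_lin _ _ _ _ _
    have hP : c.affWord (L.take (q:ℕ)) (c.lamSeq L q) ∈ c.aPos := by
      rw [c.lamSeq_eq, c.affWord_bWord]
      exact c.asimple_mem_aPos _
    have hQ : c.affWord (L.take (q:ℕ)) (c.lamSeq L r) ∈ c.aPos := by
      have h := c.claimA π L hred r ((r:ℕ) - (q:ℕ)) (by omega)
      rw [show (r:ℕ) - ((r:ℕ) - (q:ℕ)) = (q:ℕ) by omega] at h
      exact h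
    exact c.cone_pos hP hQ hc₁' hc₂' (c.affWord_mem_aR _ hAaR) hsplit
  -- the image of A under u_{r+1} is negative
  have hBr : c.affWord (L.take ((r:ℕ)+1)) A ∈ c.aNeg := by
    have hsplit : c.affWord (L.take ((r:ℕ)+1)) A
        = (c₁:ℝ) • c.affWord (L.take ((r:ℕ)+1)) (c.lamSeq L q)
          + (c₂:ℝ) • c.affWord (L.take ((r:ℕ)+1)) (c.lamSeq L r) := by
      rw [hA]; exact c.affWord_lin _ _ _ _ _
    have hP : c.affWord (L.take ((r:ℕ)+1)) (c.lamSeq L q) ∈ c.aNeg := by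
      have h := c.claimB π L hred q ((r:ℕ) - (q:ℕ)) (by omega)
      rw [show (q:ℕ) + 1 + ((r:ℕ) - (q:ℕ)) = (r:ℕ) + 1 by omega] at h
      exact h
    have hQ : c.affWord (L.take ((r:ℕ)+1)) (c.lamSeq L r) ∈ c.aNeg := by
      rw [c.affWord_take_succ L hrlen, c.lamSeq_eq, c.affWord_bWord]
      have hget : c.aS (L[(r:ℕ)]'hrlen) (c.asimple (L.get r))
          = -c.asimple (L.get r) := c.aS_asimple (L[(r:ℕ)]'hrlen)
      rw [hget]
      show -(-c.asimple (L.get r)) ∈ c.aPos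
      rw [neg_neg]
      exact c.asimple_mem_aPos _
    exact c.cone_neg hP hQ hc₁' hc₂' (c.affWord_mem_aR _ hAaR) hsplit
  have hBr' : c.affWord (L.take ((r:ℕ)+1)) A ∉ c.aPos :=
    fun h => c.aPos_aNeg_disjoint h hBr
  obtain ⟨p, hqp, hpr, hp1, hp2⟩ := c.crossing_down
    (β := fun k => c.affWord (L.take k) A) (show (q:ℕ) ≤ (r:ℕ)+1 by omega)
    hBq hBr'
  have hplen : p < L.length := by omega
  have hp2' : c.affWord (L.take (p+1)) A ∈ c.aNeg := by
    rcases c.aR_pos_or_neg (c.affWord_mem_aR (L.take (p+1)) hAaR) with h | h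
    · exact absurd h hp2
    · exact h
  have hBp_eq : c.affWord (L.take p) A = c.asimple (L[p]'hplen) := by
    apply c.eq_asimple_of_aS_neg hp1
    rw [← c.affWord_take_succ L hplen]
    exact hp2'
  have hAeq : c.lamSeq L ⟨p, hplen⟩ = A := by
    rw [c.lamSeq_eq]
    show c.bWord (L.take p) (c.asimple (L[p]'hplen)) = A
    rw [← hBp_eq, c.bWord_affWord]
  refine ⟨⟨p, hplen⟩, ?_, ?_, hAeq⟩
  · show (q:ℕ) ≤ p
    exact hqp
  · show p ≤ (r:ℕ)
    omega
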